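/- Let ξ > 0, k_c > 0, η1 ∈ ℝ, r > 0, and set z = k_c·r and u_c = k_c·ξ. Then ∫₀^{k_c} k·J₀(k r)·(1 + η1·ξ²·k² + ξ⁴·k⁴) dk = k_c² · [ J₁(z)/z + η1·u_c²·(2z·J₀(z) + (z² − 4)·J₁(z))/z³ + u_c⁴·(4(z³ − 8z)·J₀(z) + (z⁴ − 16z² + 64)·J₁(z))/z⁵ ]. This is the two-dimensional Bessel–Lommel covariance formula: the quantity (2π·η0·ξ²)^{−1} times the left-hand side equals the Bessel–Lommel covariance C^{BL}(r) of Proposition 2 for d = 2. -/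

import Mathlib

open MeasureTheory Real

/-- Bessel function of the first kind of order zero,
`J₀(x) = (1/π) ∫₀^π cos (x sin θ) dθ`. -/
noncomputable def besselJ0 (x : ℝ) : ℝ :=
  (1 / Real.pi) * ∫ θ in (0:ℝ)..Real.pi, Real.cos (x * Real.sin θ)

/-- Bessel function of the first kind of order one,
`J₁(x) = (1/π) ∫₀^π cos (θ − x sin θ) dθ`. -/
noncomputable def besselJ1 (x : ℝ) : ℝ :=
  (1 / Real.pi) * ∫ θ in (0:ℝ)..Real.pi, Real.cos (θ - x * Real.sin θ)

/- Differentiation under the integral sign for the J₀ integral. -/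
lemma J0int_hasDerivAt (x : ℝ) :
    HasDerivAt (fun y : ℝ => ∫ θ in (0:ℝ)..Real.pi, Real.cos (y * Real.sin θ))
      (∫ θ in (0:ℝ)..Real.pi, -(Real.sin θ * Real.sin (x * Real.sin θ))) x := by
  have h := intervalIntegral.hasDerivAt_integral_of_dominated_loc_of_deriv_le
    (F := fun (y : ℝ) (θ : ℝ) => Real.cos (y * Real.sin θ))
    (F' := fun (y : ℝ) (θ : ℝ) => -(Real.sin θ * Real.sin (y * Real.sin θ)))
    (x₀ := x) (bound := fun _ => 1) (a := 0) (b := Real.pi) (μ := volume)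
    (s := Metric.ball x 1) (Metric.ball_mem_nhds x one_pos)
    (Filter.Eventually.of_forall fun y =>
      (Continuous.aestronglyMeasurable (by continuity)))
    ((Continuous.intervalIntegrable (by continuity)) _ _)
    (Continuous.aestronglyMeasurable (by continuity))
    (Filter.Eventually.of_forall fun t _ y _ => by
      have h1 : |Real.sin t| ≤ 1 := abs_le.2 ⟨Real.neg_one_le_sin t, Real.sin_le_one t⟩
      have h2 : |Real.sin (y * Real.sin t)| ≤ 1 :=
        abs_le.2 ⟨Real.neg_one_le_sin _, Real.sin_le_one _⟩
      calc ‖-(Real.sin t * Real.sin (y * Real.sin t))‖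
          = |Real.sin t| * |Real.sin (y * Real.sin t)| := by
            rw [norm_neg, Real.norm_eq_abs, abs_mul]
        _ ≤ 1 * 1 := mul_le_mul h1 h2 (abs_nonneg _) zero_le_one
        _ = 1 := by ring)
    ((Continuous.intervalIntegrable continuous_const) _ _)
    (Filter.Eventually.of_forall fun t _ y _ => by
      have h0 : HasDerivAt (fun w : ℝ => w * Real.sin t) (Real.sin t) y :=
        hasDerivAt_mul_const _
      exact h0.cos.congr_deriv (by ring))
  exact h.2

/- Differentiation under the integral sign for the J₁ integral. -/
lemma J1int_hasDerivAt (x : ℝ) :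
    HasDerivAt (fun y : ℝ => ∫ θ in (0:ℝ)..Real.pi, Real.cos (θ - y * Real.sin θ))
      (∫ θ in (0:ℝ)..Real.pi, Real.sin θ * Real.sin (θ - x * Real.sin θ)) x := by
  have h := intervalIntegral.hasDerivAt_integral_of_dominated_loc_of_deriv_le
    (F := fun (y : ℝ) (θ : ℝ) => Real.cos (θ - y * Real.sin θ))
    (F' := fun (y : ℝ) (θ : ℝ) => Real.sin θ * Real.sin (θ - y * Real.sin θ))
    (x₀ := x) (bound := fun _ => 1) (a := 0) (b := Real.pi) (μ := volume)
    (s := Metric.ball x 1) (Metric.ball_mem_nhds x one_pos)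
    (Filter.Eventually.of_forall fun y =>
      (Continuous.aestronglyMeasurable (by continuity)))
    ((Continuous.intervalIntegrable (by continuity)) _ _)
    (Continuous.aestronglyMeasurable (by continuity))
    (Filter.Eventually.of_forall fun t _ y _ => by
      have h1 : |Real.sin t| ≤ 1 := abs_le.2 ⟨Real.neg_one_le_sin t, Real.sin_le_one t⟩
      have h2 : |Real.sin (t - y * Real.sin t)| ≤ 1 :=
        abs_le.2 ⟨Real.neg_one_le_sin _, Real.sin_le_one _⟩
      calc ‖Real.sin t * Real.sin (t - y * Real.sin t)‖
          = |Real.sin t| * |Real.sin (t - y * Real.sin t)| := by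
            rw [Real.norm_eq_abs, abs_mul]
        _ ≤ 1 * 1 := mul_le_mul h1 h2 (abs_nonneg _) zero_le_one
        _ = 1 := by ring)
    ((Continuous.intervalIntegrable continuous_const) _ _)
    (Filter.Eventually.of_forall fun t _ y _ => by
      have h0 : HasDerivAt (fun w : ℝ => t - w * Real.sin t) (-(Real.sin t)) y :=
        (hasDerivAt_mul_const _).const_sub t
      exact h0.cos.congr_deriv (by ring))
  exact h.2

/- `∫₀^π cos θ · cos (x sin θ) dθ = 0`. -/
lemma integral_cos_mul_cos (x : ℝ) :
    (∫ θ in (0:ℝ)..Real.pi, Real.cos θ * Real.cos (x * Real.sin θ)) = 0 := by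
  have key : ∀ θ : ℝ, HasDerivAt (fun θ : ℝ => Real.sin (x * Real.sin θ))
      (x * (Real.cos θ * Real.cos (x * Real.sin θ))) θ := by
    intro θ
    have h0 : HasDerivAt (fun θ : ℝ => x * Real.sin θ) (x * Real.cos θ) θ :=
      (Real.hasDerivAt_sin θ).const_mul x
    exact h0.sin.congr_deriv (by ring)
  have hint : (∫ θ in (0:ℝ)..Real.pi, x * (Real.cos θ * Real.cos (x * Real.sin θ))) = 0 := by
    rw [intervalIntegral.integral_eq_sub_of_hasDerivAt (fun θ _ => key θ)
      ((Continuous.intervalIntegrable (by continuity)) _ _)]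
    simp
  rw [intervalIntegral.integral_const_mul] at hint
  rcases eq_or_ne x 0 with hx | hx
  · subst hx; simp
  · exact (mul_eq_zero.1 hint).resolve_left hx

/- key recurrence integral identity for J₁. -/
lemma integral_cos_theta_sub (x : ℝ) :
    (∫ θ in (0:ℝ)..Real.pi, Real.cos (θ - x * Real.sin θ))
      = x * ∫ θ in (0:ℝ)..Real.pi, Real.cos θ * Real.cos (θ - x * Real.sin θ) := by
  have key : ∀ θ : ℝ, HasDerivAt (fun θ : ℝ => Real.sin (θ - x * Real.sin θ))
      (Real.cos (θ - x * Real.sin θ) - x * (Real.cos θ * Real.cos (θ - x * Real.sin θ))) θ := by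
    intro θ
    have h0 : HasDerivAt (fun θ : ℝ => θ - x * Real.sin θ) (1 - x * Real.cos θ) θ :=
      (hasDerivAt_id θ).sub ((Real.hasDerivAt_sin θ).const_mul x)
    exact h0.sin.congr_deriv (by ring)
  have hint : (∫ θ in (0:ℝ)..Real.pi,
      (Real.cos (θ - x * Real.sin θ) - x * (Real.cos θ * Real.cos (θ - x * Real.sin θ)))) = 0 := by
    rw [intervalIntegral.integral_eq_sub_of_hasDerivAt (fun θ _ => key θ)
      ((Continuous.intervalIntegrable (by continuity)) _ _)]
    simp
  rw [intervalIntegral.integral_sub ((Continuous.intervalIntegrable (by continuity)) _ _)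
    ((Continuous.intervalIntegrable (by continuity)) _ _),
    intervalIntegral.integral_const_mul, sub_eq_zero] at hint
  exact hint

/- `J₀' = -J₁`. -/
lemma besselJ0_hasDerivAt (x : ℝ) : HasDerivAt besselJ0 (-besselJ1 x) x := by
  have h := (J0int_hasDerivAt x).const_mul (1 / Real.pi)
  have key : (1 / Real.pi) * (∫ θ in (0:ℝ)..Real.pi, -(Real.sin θ * Real.sin (x * Real.sin θ)))
      = -besselJ1 x := by
    have hsplit : (∫ θ in (0:ℝ)..Real.pi, Real.cos (θ - x * Real.sin θ))
        = (∫ θ in (0:ℝ)..Real.pi, Real.cos θ * Real.cos (x * Real.sin θ))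
          + ∫ θ in (0:ℝ)..Real.pi, Real.sin θ * Real.sin (x * Real.sin θ) := by
      rw [← intervalIntegral.integral_add ((Continuous.intervalIntegrable (by continuity)) _ _)
        ((Continuous.intervalIntegrable (by continuity)) _ _)]
      apply intervalIntegral.integral_congr
      intro θ _
      simp only [Real.cos_sub]
    rw [integral_cos_mul_cos, zero_add] at hsplit
    rw [intervalIntegral.integral_neg, besselJ1, ← hsplit]
    ring
  rw [← key]
  exact h

/- `(t · J₁(t))' = t · J₀(t)`. -/
lemma mul_besselJ1_hasDerivAt (x : ℝ) :
    HasDerivAt (fun t : ℝ => t * besselJ1 t) (x * besselJ0 x) x := by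
  have hJ1 : HasDerivAt besselJ1
      ((1 / Real.pi) * ∫ θ in (0:ℝ)..Real.pi, Real.sin θ * Real.sin (θ - x * Real.sin θ)) x :=
    (J1int_hasDerivAt x).const_mul (1 / Real.pi)
  have h := (hasDerivAt_id x).mul hJ1
  have key : 1 * besselJ1 x
      + x * ((1 / Real.pi) * ∫ θ in (0:ℝ)..Real.pi, Real.sin θ * Real.sin (θ - x * Real.sin θ))
      = x * besselJ0 x := by
    have hc : (∫ θ in (0:ℝ)..Real.pi,
        (Real.cos θ * Real.cos (θ - x * Real.sin θ) + Real.sin θ * Real.sin (θ - x * Real.sin θ)))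
        = ∫ θ in (0:ℝ)..Real.pi, Real.cos (x * Real.sin θ) := by
      apply intervalIntegral.integral_congr
      intro θ _
      show Real.cos θ * Real.cos (θ - x * Real.sin θ)
          + Real.sin θ * Real.sin (θ - x * Real.sin θ) = Real.cos (x * Real.sin θ)
      rw [← Real.cos_sub]
      ring_nf
    rw [intervalIntegral.integral_add ((Continuous.intervalIntegrable (by continuity)) _ _)
      ((Continuous.intervalIntegrable (by continuity)) _ _)] at hc
    have hb := integral_cos_theta_sub x
    have hπ : Real.pi ≠ 0 := Real.pi_ne_zero
    rw [besselJ1, besselJ0, hb]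
    have : x * (∫ θ in (0:ℝ)..Real.pi, Real.cos θ * Real.cos (θ - x * Real.sin θ))
        + x * (∫ θ in (0:ℝ)..Real.pi, Real.sin θ * Real.sin (θ - x * Real.sin θ))
        = x * ∫ θ in (0:ℝ)..Real.pi, Real.cos (x * Real.sin θ) := by
      rw [← mul_add, hc]
    field_simp
    linarith [this]
  rw [← key]
  exact h

lemma besselJ0_continuous : Continuous besselJ0 := by
  have h : Differentiable ℝ besselJ0 := fun x => (besselJ0_hasDerivAt x).differentiableAt
  exact h.continuous

lemma besselJ1_continuous : Continuous besselJ1 := by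
  have h : Differentiable ℝ besselJ1 :=
    fun x => ((J1int_hasDerivAt x).const_mul (1 / Real.pi)).differentiableAt
  exact h.continuous

lemma G2_hasDerivAt (t : ℝ) :
    HasDerivAt (fun t : ℝ => 2 * t ^ 2 * besselJ0 t + (t ^ 2 - 4) * (t * besselJ1 t))
      (t ^ 3 * besselJ0 t) t := by
  have h1 : HasDerivAt (fun t : ℝ => 2 * t ^ 2) (2 * ((2:ℕ) * t ^ 1)) t :=
    (hasDerivAt_pow 2 t).const_mul 2
  have hA := h1.mul (besselJ0_hasDerivAt t)
  have h2 : HasDerivAt (fun t : ℝ => t ^ 2 - 4) ((2:ℕ) * t ^ 1) t :=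
    (hasDerivAt_pow 2 t).sub_const 4
  have hB := h2.mul (mul_besselJ1_hasDerivAt t)
  have h := hA.add hB
  refine h.congr_deriv ?_
  push_cast
  ring

lemma G3_hasDerivAt (t : ℝ) :
    HasDerivAt (fun t : ℝ => (4 * t ^ 4 - 32 * t ^ 2) * besselJ0 t
        + (t ^ 4 - 16 * t ^ 2 + 64) * (t * besselJ1 t))
      (t ^ 5 * besselJ0 t) t := by
  have h1 : HasDerivAt (fun t : ℝ => 4 * t ^ 4 - 32 * t ^ 2)
      (4 * ((4:ℕ) * t ^ 3) - 32 * ((2:ℕ) * t ^ 1)) t :=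
    ((hasDerivAt_pow 4 t).const_mul 4).sub ((hasDerivAt_pow 2 t).const_mul 32)
  have hA := h1.mul (besselJ0_hasDerivAt t)
  have h2 : HasDerivAt (fun t : ℝ => t ^ 4 - 16 * t ^ 2 + 64)
      ((4:ℕ) * t ^ 3 - 16 * ((2:ℕ) * t ^ 1)) t :=
    ((hasDerivAt_pow 4 t).sub ((hasDerivAt_pow 2 t).const_mul 16)).add_const 64
  have hB := h2.mul (mul_besselJ1_hasDerivAt t)
  have h := hA.add hB
  refine h.congr_deriv ?_
  push_cast
  ring

/-- The two-dimensional Bessel–Lommel covariance formula. -/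
theorem bessel_lommel_covariance_dim_two (ξ kc η1 r : ℝ)
    (hξ : 0 < ξ) (hkc : 0 < kc) (hη : -2 < η1) (hr : 0 < r)
    (z uc : ℝ) (hz : z = kc * r) (huc : uc = kc * ξ) :
    (∫ k in (0:ℝ)..kc, k * besselJ0 (k * r) * (1 + η1 * ξ ^ 2 * k ^ 2 + ξ ^ 4 * k ^ 4))
      = kc ^ 2 *
        (besselJ1 z / z
          + η1 * uc ^ 2 * (2 * z * besselJ0 z + (z ^ 2 - 4) * besselJ1 z) / z ^ 3
          + uc ^ 4 * (4 * (z ^ 3 - 8 * z) * besselJ0 z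
              + (z ^ 4 - 16 * z ^ 2 + 64) * besselJ1 z) / z ^ 5) ∧
    ∀ η0 : ℝ, 0 < η0 →
      (1 / (2 * Real.pi)) *
          (∫ k in (0:ℝ)..kc, k * besselJ0 (k * r) *
            ((η0 * ξ ^ 2)⁻¹ * (1 + η1 * ξ ^ 2 * k ^ 2 + ξ ^ 4 * k ^ 4)))
        = (2 * Real.pi * η0 * ξ ^ 2)⁻¹ * (kc ^ 2 *
            (besselJ1 z / z
              + η1 * uc ^ 2 * (2 * z * besselJ0 z + (z ^ 2 - 4) * besselJ1 z) / z ^ 3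
              + uc ^ 4 * (4 * (z ^ 3 - 8 * z) * besselJ0 z
                  + (z ^ 4 - 16 * z ^ 2 + 64) * besselJ1 z) / z ^ 5)) := by
  subst hz huc
  have hrne : r ≠ 0 := ne_of_gt hr
  have hkcne : kc ≠ 0 := ne_of_gt hkc
  have hξne : ξ ≠ 0 := ne_of_gt hξ
  set Φ : ℝ → ℝ := fun k =>
    (1 / r ^ 2) * ((k * r) * besselJ1 (k * r))
    + η1 * ξ ^ 2 * ((1 / r ^ 4) * (2 * (k * r) ^ 2 * besselJ0 (k * r)
        + ((k * r) ^ 2 - 4) * ((k * r) * besselJ1 (k * r))))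
    + ξ ^ 4 * ((1 / r ^ 6) * ((4 * (k * r) ^ 4 - 32 * (k * r) ^ 2) * besselJ0 (k * r)
        + ((k * r) ^ 4 - 16 * (k * r) ^ 2 + 64) * ((k * r) * besselJ1 (k * r)))) with hΦdef
  have hΦ : ∀ k : ℝ, HasDerivAt Φ
      (k * besselJ0 (k * r) * (1 + η1 * ξ ^ 2 * k ^ 2 + ξ ^ 4 * k ^ 4)) k := by
    intro k
    have hkr : HasDerivAt (fun k : ℝ => k * r) r k := hasDerivAt_mul_const r
    have h1 := ((mul_besselJ1_hasDerivAt (k * r)).comp k hkr).const_mul ((1:ℝ) / r ^ 2)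
    have h2 := ((G2_hasDerivAt (k * r)).comp k hkr).const_mul (η1 * ξ ^ 2 * (1 / r ^ 4))
    have h3 := ((G3_hasDerivAt (k * r)).comp k hkr).const_mul (ξ ^ 4 * (1 / r ^ 6))
    have h := (h1.add h2).add h3
    have heq : Φ = fun k : ℝ =>
        (1 / r ^ 2) * ((fun t : ℝ => t * besselJ1 t) ∘ (fun k : ℝ => k * r)) k
        + η1 * ξ ^ 2 * (1 / r ^ 4) * ((fun t : ℝ => 2 * t ^ 2 * besselJ0 t
            + (t ^ 2 - 4) * (t * besselJ1 t)) ∘ (fun k : ℝ => k * r)) k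
        + ξ ^ 4 * (1 / r ^ 6) * ((fun t : ℝ => (4 * t ^ 4 - 32 * t ^ 2) * besselJ0 t
            + (t ^ 4 - 16 * t ^ 2 + 64) * (t * besselJ1 t)) ∘ (fun k : ℝ => k * r)) k := by
      funext k
      simp only [hΦdef, Function.comp]
      ring
    rw [heq]
    refine h.congr_deriv ?_
    have hr2 : (k * r) ^ 2 = k ^ 2 * r ^ 2 := by ring
    field_simp
  have hcont : Continuous (fun k : ℝ =>
      k * besselJ0 (k * r) * (1 + η1 * ξ ^ 2 * k ^ 2 + ξ ^ 4 * k ^ 4)) := by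
    apply Continuous.mul
    · exact continuous_id.mul (besselJ0_continuous.comp (by continuity))
    · continuity
  have key := intervalIntegral.integral_eq_sub_of_hasDerivAt
    (f := Φ) (a := 0) (b := kc) (fun k _ => hΦ k) (hcont.intervalIntegrable _ _)
  have hΦ0 : Φ 0 = 0 := by simp [hΦdef]
  have hmain : (∫ k in (0:ℝ)..kc, k * besselJ0 (k * r) *
        (1 + η1 * ξ ^ 2 * k ^ 2 + ξ ^ 4 * k ^ 4))
      = kc ^ 2 *
        (besselJ1 (kc * r) / (kc * r)
          + η1 * (kc * ξ) ^ 2 * (2 * (kc * r) * besselJ0 (kc * r)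
              + ((kc * r) ^ 2 - 4) * besselJ1 (kc * r)) / (kc * r) ^ 3
          + (kc * ξ) ^ 4 * (4 * ((kc * r) ^ 3 - 8 * (kc * r)) * besselJ0 (kc * r)
              + ((kc * r) ^ 4 - 16 * (kc * r) ^ 2 + 64) * besselJ1 (kc * r)) / (kc * r) ^ 5) := by
    rw [key, hΦ0, sub_zero, hΦdef]
    field_simp
    ring
  refine ⟨hmain, ?_⟩
  intro η0 hη0
  have hη0ne : η0 ≠ 0 := ne_of_gt hη0
  have h2 : (∫ k in (0:ℝ)..kc, k * besselJ0 (k * r) *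
        ((η0 * ξ ^ 2)⁻¹ * (1 + η1 * ξ ^ 2 * k ^ 2 + ξ ^ 4 * k ^ 4)))
      = (η0 * ξ ^ 2)⁻¹ * ∫ k in (0:ℝ)..kc, k * besselJ0 (k * r) *
        (1 + η1 * ξ ^ 2 * k ^ 2 + ξ ^ 4 * k ^ 4) := by
    rw [← intervalIntegral.integral_const_mul]
    apply intervalIntegral.integral_congr
    intro k _
    ring
  rw [h2, hmain, ← mul_assoc]
  congr 1
  have hπ : Real.pi ≠ 0 := Real.pi_ne_zero
  rw [show (2 * Real.pi * η0 * ξ ^ 2) = (2 * Real.pi) * (η0 * ξ ^ 2) by ring, mul_inv, mul_inv, one_div]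
  ring
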